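/- For every n × N 0-1 matrix M with n ≤ N, the maximum homogeneous staircase length satisfies st(M) ≥ ⌈(⌈n/2⌉ + N − 1)/2⌉. -/

import Mathlib

/-- A step of a staircase: the next position is strictly to the right in the
same row, or strictly below in the same column. -/
def Step {n N : ℕ} (p q : Fin n × Fin N) : Prop :=
  (p.1 = q.1 ∧ p.2 < q.2) ∨ (p.2 = q.2 ∧ p.1 < q.1)

/-- A `v`-staircase in the 0-1 matrix `M`: a sequence of positions all holding
the value `v`, each successive one strictly to the right in the same row or
strictly below in the same column of the previous one. -/
def IsStaircase {n N : ℕ} (M : Fin n → Fin N → Fin 2) (v : Fin 2)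
    (L : List (Fin n × Fin N)) : Prop :=
  (∀ p ∈ L, M p.1 p.2 = v) ∧ L.Chain' Step

lemma length_filter_add {α} (l : List α) (p q : α → Bool)
    (h : ∀ x ∈ l, q x = !p x) :
    (l.filter p).length + (l.filter q).length = l.length := by
  induction l with
  | nil => simp
  | cons x t ih =>
    have hx := h x (by simp)
    have ht := ih (fun y hy => h y (List.mem_cons_of_mem _ hy))
    simp only [List.filter_cons]
    cases hpx : p x
    · rw [hpx] at hx; simp [hx]; omega
    · rw [hpx] at hx; simp [hx]; omega

/-- For every n × N 0-1 matrix M with 1 ≤ n ≤ N, M has a homogeneous staircase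
of length at least ⌈(⌈n/2⌉ + N − 1)/2⌉. -/
theorem stmt5 (n N : ℕ) (hn : 1 ≤ n) (hnN : n ≤ N) (M : Fin n → Fin N → Fin 2) :
    ∃ (v : Fin 2) (L : List (Fin n × Fin N)),
      IsStaircase M v L ∧ ((n + 1) / 2 + N - 1 + 1) / 2 ≤ L.length := by
  have hN : 0 < N := hn.trans hnN
  obtain ⟨N', rfl⟩ : ∃ N', N = N' + 1 := ⟨N - 1, by omega⟩
  set c0 : Fin (N' + 1) := ⟨0, hN⟩ with hc0
  -- column 0 counts
  set col : Fin 2 → List (Fin n) :=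
    fun w => (List.finRange n).filter (fun i => M i c0 = w) with hcol
  have hdec : ∀ y : Fin 2, decide (y = 1) = !decide (y = 0) := by decide
  have hcolsum : (col 0).length + (col 1).length = n := by
    have := length_filter_add (List.finRange n)
      (fun i => decide (M i c0 = 0)) (fun i => decide (M i c0 = 1))
      (fun x _ => hdec (M x c0))
    simpa [hcol] using this
  obtain ⟨v, hv⟩ : ∃ v : Fin 2, (n + 1) / 2 ≤ (col v).length := by
    by_cases h : (n + 1) / 2 ≤ (col 0).length
    · exact ⟨0, h⟩
    · exact ⟨1, by omega⟩
  have hne : col v ≠ [] := by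
    intro h
    rw [h] at hv
    simp at hv
    omega
  set a : Fin n := (col v).getLast hne with ha
  have haM : M a c0 = v := by
    have h1 := List.getLast_mem hne
    rw [ha]
    simp only [hcol, List.mem_filter, decide_eq_true_iff] at h1
    exact h1.2
  -- row a lists
  set base : List (Fin (N' + 1)) := (List.finRange (N' + 1)).filter (fun j => 0 < j.val)
    with hbase
  set row : Fin 2 → List (Fin (N' + 1)) :=
    fun w => base.filter (fun j => M a j = w) with hrow
  have hbaselen : base.length = N' := by
    rw [hbase, List.finRange_succ, List.filter_cons]
    have h0 : (decide (0 < ((0 : Fin (N' + 1))).val)) = false := by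
      simp
    rw [h0]
    simp only [Bool.false_eq_true, if_false]
    rw [List.filter_map]
    have he : (fun (j : Fin (N' + 1)) => decide (0 < j.val)) ∘ (Fin.succ : Fin N' → Fin (N' + 1)) = fun _ => true := by
      funext i; simp [Fin.val_succ]
    rw [he]
    simp
  have hrowsum : (row 0).length + (row 1).length = N' := by
    have := length_filter_add base
      (fun j => decide (M a j = 0)) (fun j => decide (M a j = 1))
      (fun x _ => hdec (M a x))
    rw [hbaselen] at this
    simpa [hrow] using this
  -- the two candidate staircases
  set w : Fin 2 := v + 1 with hw
  set L1 : List (Fin n × Fin (N' + 1)) :=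
    ((col v).map (fun i => (i, c0))) ++ ((row v).map (fun j => (a, j))) with hL1
  set L2 : List (Fin n × Fin (N' + 1)) := (row w).map (fun j => (a, j)) with hL2
  -- membership facts
  have hmem_col : ∀ i ∈ col v, M i c0 = v := by
    intro i hi
    rw [hcol] at hi
    simp only [List.mem_filter, decide_eq_true_iff] at hi
    exact hi.2
  have hmem_row : ∀ u : Fin 2, ∀ j ∈ row u, 0 < j.val ∧ M a j = u := by
    intro u j hj
    rw [hrow, hbase] at hj
    simp only [List.mem_filter, decide_eq_true_iff] at hj
    exact ⟨hj.1.2, hj.2⟩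
  -- chain: sorted parts
  have hcol_pw : (col v).Pairwise (· < ·) := by
    rw [hcol]; exact (List.pairwise_lt_finRange n).filter _
  have hrow_pw : ∀ u : Fin 2, (row u).Pairwise (· < ·) := by
    intro u
    rw [hrow, hbase]
    exact ((List.pairwise_lt_finRange _).filter _).filter _
  have hchain_col : ((col v).map (fun i => (i, c0))).Chain' Step := by
    show List.IsChain _ _
    rw [List.isChain_map]
    exact (hcol_pw.imp (fun h => Or.inr ⟨rfl, h⟩)).isChain
  have hchain_row : ∀ u : Fin 2, ((row u).map (fun j => (a, j))).Chain' Step := by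
    intro u
    show List.IsChain _ _
    rw [List.isChain_map]
    exact ((hrow_pw u).imp (fun h => Or.inl ⟨rfl, h⟩)).isChain
  have hstair2 : IsStaircase M w L2 := by
    constructor
    · intro p hp
      rw [hL2] at hp
      simp only [List.mem_map] at hp
      obtain ⟨j, hj, rfl⟩ := hp
      exact (hmem_row w j hj).2
    · exact hchain_row w
  have hstair1 : IsStaircase M v L1 := by
    constructor
    · intro p hp
      rw [hL1] at hp
      rcases List.mem_append.1 hp with h | h <;> simp only [List.mem_map] at h
      · obtain ⟨i, hi, rfl⟩ := h; exact hmem_col i hi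
      · obtain ⟨j, hj, rfl⟩ := h; exact (hmem_row v j hj).2
    · rw [hL1]
      show List.IsChain _ _
      rw [List.isChain_append]
      refine ⟨hchain_col, hchain_row v, ?_⟩
      intro x hx y hy
      have hy' := List.mem_of_mem_head? hy
      simp only [List.mem_map] at hy'
      obtain ⟨j, hj, rfl⟩ := hy'
      have hjpos := (hmem_row v j hj).1
      rw [List.getLast?_map, List.getLast?_eq_getLast hne] at hx
      simp only [Option.map_some, Option.mem_def, Option.some_inj] at hx
      have hx1 : x = (a, c0) := by rw [← hx, ha]
      subst hx1
      left
      exact ⟨rfl, Fin.lt_def.2 hjpos⟩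
  -- lengths
  have hlen1 : L1.length = (col v).length + (row v).length := by
    rw [hL1]; simp
  have hlen2 : L2.length = (row w).length := by rw [hL2]; simp
  have hsum : (row v).length + (row w).length = N' := by
    have hall : ∀ u : Fin 2, u = 0 ∧ u + 1 = 1 ∨ u = 1 ∧ u + 1 = 0 := by decide
    have hv2 : v = 0 ∧ w = 1 ∨ v = 1 ∧ w = 0 := by
      rw [hw]; exact hall v
    rcases hv2 with ⟨h1, h2⟩ | ⟨h1, h2⟩ <;> rw [h1, h2] <;> omega
  by_cases hbig : ((n + 1) / 2 + (N' + 1) - 1 + 1) / 2 ≤ L1.length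
  · exact ⟨v, L1, hstair1, hbig⟩
  · refine ⟨w, L2, hstair2, ?_⟩
    rw [hlen2]
    rw [hlen1] at hbig
    omega
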